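/- Let f : ℝ → ℝ admit an entire complex extension and let a > 0. Then the limit as ω → 0⁺ of (∫_0^a f(x)/(ω + x) dx)/(-ln ω) exists and equals f(0). In particular, if f(0) ≠ 0, then ∫_0^a f(x)/(ω + x) dx ~ -f(0) ln ω as ω → 0⁺. -/

import Mathlib

open Filter MeasureTheory Set

lemma aux_div_tendsto_zero {l : Filter ℝ} {N g : ℝ → ℝ} {M : ℝ}
    (hN : ∀ᶠ ω in l, |N ω| ≤ M) (hgpos : ∀ᶠ ω in l, 0 < g ω)
    (hg : Tendsto g l atTop) :
    Tendsto (fun ω => N ω / g ω) l (nhds 0) := by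
  have hlim : Tendsto (fun ω => |M| / g ω) l (nhds 0) :=
    Tendsto.div_atTop tendsto_const_nhds hg
  refine squeeze_zero_norm' ?_ hlim
  filter_upwards [hN, hgpos] with ω h1 h2
  rw [Real.norm_eq_abs, abs_div, abs_of_pos h2]
  exact (div_le_div_iff_of_pos_right h2).mpr (h1.trans (le_abs_self M))

/-- For `f` with entire complex extension and `a > 0`,
`(∫_0^a f(x)/(ω+x) dx)/(−ln ω) → f(0)` as `ω → 0⁺` within `(0, a)`. -/
theorem stmt_13 (f : ℝ → ℝ) (F : ℂ → ℂ)
    (hF : Differentiable ℂ F) (hFf : ∀ x : ℝ, F x = f x)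
    (a : ℝ) (ha : 0 < a) :
    Tendsto (fun ω : ℝ => (∫ x in (0 : ℝ)..a, f x / (ω + x)) / (-Real.log ω))
      (nhdsWithin 0 (Set.Ioo 0 a)) (nhds (f 0)) := by
  -- continuity of f
  have hfc : Continuous f := by
    have hre : f = fun x : ℝ => (F x).re := by
      funext x; rw [hFf x]; simp
    rw [hre]
    exact Complex.continuous_re.comp (hF.continuous.comp Complex.continuous_ofReal)
  -- the difference-slope function
  set G : ℂ → ℂ := dslope F 0 with hGdef
  have hGc : Continuous fun x : ℝ => G x := by
    have : Continuous G := by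
      rw [continuous_iff_continuousAt]
      intro z
      rcases eq_or_ne z 0 with rfl | hz
      · exact continuousAt_dslope_same.2 (hF.differentiableAt)
      · exact ((differentiableAt_dslope_of_ne hz).2 hF.differentiableAt).continuousAt
    exact this.comp Complex.continuous_ofReal
  -- bound on [0, a]
  obtain ⟨C, hC⟩ : ∃ C, ∀ x ∈ Icc (0:ℝ) a, ‖G x‖ ≤ C :=
    (isCompact_Icc).exists_bound_of_continuousOn (hGc.continuousOn)
  have hC0 : 0 ≤ C := le_trans (norm_nonneg _) (hC 0 ⟨le_refl 0, ha.le⟩)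
  -- pointwise bound on f x - f 0
  have hfb : ∀ x ∈ Icc (0:ℝ) a, |f x - f 0| ≤ C * x := by
    intro x hx
    rcases eq_or_lt_of_le hx.1 with rfl | hx0
    · simp
    · have hxne : (x : ℂ) ≠ 0 := by exact_mod_cast hx0.ne'
      have hGx : G x = ((x⁻¹ * (f x - f 0) : ℝ) : ℂ) := by
        have h0 : F 0 = ((f 0 : ℝ) : ℂ) := by simpa using hFf 0
        rw [hGdef, dslope_of_ne _ hxne, slope_def_field, hFf, h0]
        push_cast
        field_simp
        ring
      have := hC x hx
      rw [hGx, Complex.norm_real, Real.norm_eq_abs, abs_mul, abs_inv,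
        abs_of_pos hx0] at this
      calc |f x - f 0| = x * (x⁻¹ * |f x - f 0|) := by field_simp
        _ ≤ x * C := by
            apply mul_le_mul_of_nonneg_left this hx.1
        _ = C * x := mul_comm _ _
  -- integral computations for each ω ∈ (0, a)
  have key : ∀ ω ∈ Ioo (0:ℝ) a,
      (∫ x in (0:ℝ)..a, f x / (ω + x)) =
        (∫ x in (0:ℝ)..a, (f x - f 0) / (ω + x)) +
          f 0 * (Real.log (ω + a) - Real.log ω) := by
    intro ω hω
    have hω1 := hω.1
    have hω2 := hω.2
    have hden : ∀ x ∈ uIcc (0:ℝ) a, ω + x ≠ 0 := by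
      intro x hx
      rw [uIcc_of_le ha.le] at hx
      have : 0 < ω + x := add_pos_of_pos_of_nonneg hω.1 hx.1
      exact this.ne'
    have hcont : ContinuousOn (fun x : ℝ => (ω + x)⁻¹) (uIcc (0:ℝ) a) :=
      (ContinuousOn.inv₀ (by fun_prop) hden)
    have h1 : IntervalIntegrable (fun x => (f x - f 0) / (ω + x)) volume 0 a := by
      apply ContinuousOn.intervalIntegrable
      exact ((hfc.sub continuous_const).continuousOn).div (by fun_prop) hden
    have h2 : IntervalIntegrable (fun x => f 0 / (ω + x)) volume 0 a := by
      apply ContinuousOn.intervalIntegrable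
      exact (continuousOn_const).div (by fun_prop) hden
    have hlog : (∫ x in (0:ℝ)..a, 1 / (ω + x)) = Real.log (ω + a) - Real.log ω := by
      have := intervalIntegral.integral_comp_add_left (a := (0:ℝ)) (b := a)
        (fun t => 1 / t) ω
      rw [add_zero] at this
      rw [this, integral_one_div (by
        rw [uIcc_of_le (by linarith)]
        rintro ⟨h1', h2'⟩
        linarith), Real.log_div (by positivity : (0:ℝ) < ω + a).ne' hω.1.ne']
    calc (∫ x in (0:ℝ)..a, f x / (ω + x))
        = ∫ x in (0:ℝ)..a, ((f x - f 0) / (ω + x) + f 0 / (ω + x)) := by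
          congr 1; funext x; rw [← add_div]; ring_nf
      _ = (∫ x in (0:ℝ)..a, (f x - f 0) / (ω + x)) + ∫ x in (0:ℝ)..a, f 0 / (ω + x) :=
          intervalIntegral.integral_add h1 h2
      _ = (∫ x in (0:ℝ)..a, (f x - f 0) / (ω + x)) + f 0 * ∫ x in (0:ℝ)..a, 1 / (ω + x) := by
          congr 1
          rw [← intervalIntegral.integral_const_mul]
          apply intervalIntegral.integral_congr
          intro x _
          ring
      _ = _ := by rw [hlog]
  -- bound on the remainder integral
  have hR : ∀ ω ∈ Ioo (0:ℝ) a,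
      |(∫ x in (0:ℝ)..a, (f x - f 0) / (ω + x))| ≤ C * a := by
    intro ω hω
    have := intervalIntegral.norm_integral_le_of_norm_le_const
      (a := 0) (b := a) (C := C) (f := fun x => (f x - f 0) / (ω + x)) ?_
    · rw [Real.norm_eq_abs, sub_zero, abs_of_pos ha] at this
      exact this
    · intro x hx
      rw [uIoc_of_le ha.le] at hx
      have hx0 : 0 < x := hx.1
      have hωx : 0 < ω + x := by linarith [hω.1]
      rw [Real.norm_eq_abs, abs_div, abs_of_pos hωx]
      rw [div_le_iff₀ hωx]
      calc |f x - f 0| ≤ C * x := hfb x ⟨hx0.le, hx.2⟩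
        _ ≤ C * (ω + x) := by nlinarith [hω.1]
  -- the limit
  have hlogTop : Tendsto (fun ω : ℝ => -Real.log ω) (nhdsWithin 0 (Ioo 0 a)) atTop := by
    have : Tendsto Real.log (nhdsWithin 0 (Ioo 0 a)) atBot :=
      Real.tendsto_log_nhdsGT_zero.mono_left
        (nhdsWithin_mono _ (fun x hx => hx.1))
    exact tendsto_neg_atBot_atTop.comp this
  have hlogpos : ∀ᶠ ω in nhdsWithin 0 (Ioo 0 a), 0 < -Real.log ω :=
    hlogTop.eventually_gt_atTop 0
  have hmem : ∀ᶠ ω in nhdsWithin 0 (Ioo 0 a), ω ∈ Ioo 0 a := self_mem_nhdsWithin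
  -- log (ω + a) is bounded near 0
  have hlog2 : ∀ᶠ ω in nhdsWithin 0 (Ioo 0 a), |Real.log (ω + a)| ≤ |Real.log a| + |Real.log (2*a)| := by
    filter_upwards [hmem] with ω hω
    have h1 : a ≤ ω + a := by linarith [hω.1]
    have h2 : ω + a ≤ 2 * a := by linarith [hω.2]
    have l1 : Real.log a ≤ Real.log (ω + a) := Real.log_le_log ha h1
    have l2 : Real.log (ω + a) ≤ Real.log (2 * a) := Real.log_le_log (by linarith [hω.1]) h2
    rw [abs_le]
    constructor
    · calc -( |Real.log a| + |Real.log (2*a)|) ≤ -|Real.log a| := by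
            have := abs_nonneg (Real.log (2*a)); linarith
        _ ≤ Real.log a := neg_abs_le _
        _ ≤ _ := l1
    · calc Real.log (ω + a) ≤ Real.log (2*a) := l2
        _ ≤ |Real.log (2*a)| := le_abs_self _
        _ ≤ _ := by have := abs_nonneg (Real.log a); linarith
  set N : ℝ → ℝ := fun ω => (∫ x in (0:ℝ)..a, (f x - f 0) / (ω + x)) + f 0 * Real.log (ω + a)
    with hNdef
  have hNbound : ∀ᶠ ω in nhdsWithin 0 (Ioo 0 a),
      |N ω| ≤ C * a + |f 0| * (|Real.log a| + |Real.log (2*a)|) := by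
    filter_upwards [hmem, hlog2] with ω hω hl
    calc |N ω| ≤ |(∫ x in (0:ℝ)..a, (f x - f 0) / (ω + x))| + |f 0 * Real.log (ω + a)| :=
          abs_add_le _ _
      _ ≤ C * a + |f 0| * (|Real.log a| + |Real.log (2*a)|) := by
          rw [abs_mul]
          have := hR ω hω
          have h2 : |f 0| * |Real.log (ω + a)| ≤ |f 0| * (|Real.log a| + |Real.log (2*a)|) :=
            mul_le_mul_of_nonneg_left hl (abs_nonneg _)
          linarith
  have hNlim : Tendsto (fun ω => N ω / (-Real.log ω)) (nhdsWithin 0 (Ioo 0 a)) (nhds 0) :=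
    aux_div_tendsto_zero hNbound hlogpos hlogTop
  have hfinal : Tendsto (fun ω => N ω / (-Real.log ω) + f 0)
      (nhdsWithin 0 (Ioo 0 a)) (nhds (f 0)) := by
    have := hNlim.add (tendsto_const_nhds (x := f 0))
    simpa using this
  refine hfinal.congr' ?_
  filter_upwards [hmem, hlogpos] with ω hω hlp
  have hlogne : Real.log ω ≠ 0 := by
    intro h; rw [h] at hlp; simp at hlp
  rw [key ω hω, hNdef]
  field_simp
  ring
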